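/- arXiv:1204.4996 — 2 statements merged into one kernel-verified Lean document; each statement's English description precedes it below -/
import Mathlib

section
/- In a D_ε-uniform metric space (X, d_ε), any two points x, y satisfy the quasihyperbolic distance bound k_ε(x,y) ≤ 4 D_ε² log(1 + d_ε(x,y)/min{d_ε(x), d_ε(y)}). -/
open Metric UniformSpace

noncomputable def lineIntegral {X : Type*} [MetricSpace X] (ρ : X → ℝ) (γ : ℝ → X) (L : ℝ) : ℝ :=
  ∫ t in (0:ℝ)..L, ρ (γ t)

def IsUnitSpeed {X : Type*} [MetricSpace X] (γ : ℝ → X) (L : ℝ) : Prop :=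
  0 ≤ L ∧ LipschitzOnWith 1 γ (Set.Icc 0 L)

noncomputable def confDist {X : Type*} [MetricSpace X] (ρ : X → ℝ) (x y : X) : ℝ :=
  sInf {r : ℝ | ∃ γ L, IsUnitSpeed γ L ∧ γ 0 = x ∧ γ L = y ∧ r = lineIntegral ρ γ L}

noncomputable def distB {X : Type*} [MetricSpace X] (z : X) : ℝ :=
  Metric.infDist ((z : Completion X)) ((Set.range ((↑) : X → Completion X))ᶜ)

noncomputable def qhDist {X : Type*} [MetricSpace X] (x y : X) : ℝ :=
  confDist (fun z => 1 / distB z) x y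

def RectConn (X : Type*) [MetricSpace X] : Prop :=
  ∀ x y : X, ∃ γ L, IsUnitSpeed γ L ∧ γ 0 = x ∧ γ L = y

/- ## Auxiliary real-analysis lemmas -/

lemma aux_log_succ_le (D : ℝ) (hD : 1 ≤ D) : Real.log (D + 1) ≤ D * Real.log 2 := by
  have hpos : (0:ℝ) < (D+1)/2 := by linarith
  have h1 : Real.log ((D+1)/2) ≤ (D+1)/2 - 1 := Real.log_le_sub_one_of_pos hpos
  have hl2 : (1:ℝ)/2 ≤ Real.log 2 := by
    have := Real.log_two_gt_d9; linarith
  have heq : Real.log (D+1) = Real.log ((D+1)/2) + Real.log 2 := by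
    rw [← Real.log_mul (ne_of_gt hpos) (by norm_num)]
    norm_num
  nlinarith

lemma aux_bernoulli_log (p a : ℝ) (hp : 1 ≤ p) (ha : 0 ≤ a) :
    Real.log (1 + p * a) ≤ p * Real.log (1 + a) := by
  have h1 : (1:ℝ) + p * a ≤ (1 + a) ^ p :=
    one_add_mul_self_le_rpow_one_add (by linarith) hp
  calc Real.log (1 + p*a) ≤ Real.log ((1+a)^p) := Real.log_le_log (by positivity) h1
    _ = p * Real.log (1+a) := Real.log_rpow (by linarith) p

lemma aux_key_ineq (D a : ℝ) (hD : 1 ≤ D) (ha : 2/(D+1) ≤ a) :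
    Real.log (D+1) + D * Real.log ((D+1)*a/2) ≤ 2 * D^2 * Real.log (1+a) := by
  have hD1 : (0:ℝ) < D + 1 := by linarith
  have hD0 : (0:ℝ) ≤ D := by linarith
  have ha0 : 0 < a := lt_of_lt_of_le (by positivity) ha
  have hlog1a : 0 ≤ Real.log (1+a) := Real.log_nonneg (by linarith)
  have hfact : Real.log (D+1) ≤ D * Real.log 2 := aux_log_succ_le D hD
  by_cases ha1 : a ≤ 1
  · have hstep : Real.log ((D+1)*a/2) ≤ Real.log (1+D*a) - Real.log 2 := by
      rw [← Real.log_div (by positivity) (by norm_num)]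
      apply Real.log_le_log (by positivity)
      rw [div_le_div_iff₀ (by norm_num) (by norm_num)]
      nlinarith
    have hb : Real.log (1+D*a) ≤ D * Real.log (1+a) := aux_bernoulli_log D a hD ha0.le
    calc Real.log (D+1) + D * Real.log ((D+1)*a/2)
        ≤ D * Real.log 2 + D * (Real.log (1+D*a) - Real.log 2) := by
          have := mul_le_mul_of_nonneg_left hstep hD0
          linarith
      _ = D * Real.log (1+D*a) := by ring
      _ ≤ D * (D * Real.log (1+a)) := mul_le_mul_of_nonneg_left hb hD0
      _ ≤ 2*D^2*Real.log (1+a) := by nlinarith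
  · push_neg at ha1
    have hsplit : Real.log ((D+1)*a/2) = Real.log (D+1) + Real.log a - Real.log 2 := by
      rw [Real.log_div (by positivity) (by norm_num),
        Real.log_mul (ne_of_gt hD1) (ne_of_gt ha0)]
    have h1 : Real.log a ≤ Real.log (1+a) := Real.log_le_log ha0 (by linarith)
    have h2 : Real.log 2 ≤ Real.log (1+a) := Real.log_le_log (by norm_num) (by linarith)
    rw [hsplit]
    have e1 : Real.log (D+1) + D * (Real.log (D+1) + Real.log a - Real.log 2)
        = (D+1) * Real.log (D+1) + D * Real.log a - D * Real.log 2 := by ring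
    rw [e1]
    have e2 : (D+1) * Real.log (D+1) ≤ (D+1) * (D * Real.log 2) :=
      mul_le_mul_of_nonneg_left hfact (by linarith)
    have e3 : D * Real.log a ≤ D * Real.log (1+a) := mul_le_mul_of_nonneg_left h1 hD0
    nlinarith [mul_le_mul_of_nonneg_left h2 (mul_nonneg hD0 hD0),
      mul_nonneg (mul_nonneg (by linarith : (0:ℝ) ≤ D - 1) hD0) hlog1a, sq_nonneg D]

/-- The main integral estimate on one half of a uniform curve. -/
lemma aux_half_bound (φ : ℝ → ℝ) (D m a h : ℝ) (hD : 1 ≤ D) (hm : 0 < m) (ha : 0 ≤ a)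
    (hh0 : 0 ≤ h) (hha : 2 * h ≤ D * m * a)
    (hcont : ContinuousOn φ (Set.Icc 0 h))
    (hpos : ∀ t ∈ Set.Icc 0 h, 0 < φ t)
    (hb1 : ∀ t ∈ Set.Icc 0 h, m - t ≤ φ t)
    (hb2 : ∀ t ∈ Set.Icc 0 h, t / D ≤ φ t) :
    (∫ t in (0:ℝ)..h, 1 / φ t) ≤ 2 * D^2 * Real.log (1 + a) := by
  have hD0 : (0:ℝ) < D := lt_of_lt_of_le one_pos hD
  have hD1 : (0:ℝ) < D + 1 := by linarith
  set t1 := D * m / (D + 1) with ht1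
  have ht1pos : 0 < t1 := by positivity
  have ht1m : t1 < m := by
    rw [ht1, div_lt_iff₀ hD1]; nlinarith
  have hmt1 : m - t1 = m / (D+1) := by
    rw [ht1]; field_simp; ring
  have hIf : IntervalIntegrable (fun t => 1 / φ t) MeasureTheory.volume 0 h := by
    apply ContinuousOn.intervalIntegrable
    rw [Set.uIcc_of_le hh0]
    exact continuousOn_const.div hcont (fun t ht => (hpos t ht).ne')
  have hlog1a : 0 ≤ Real.log (1+a) := Real.log_nonneg (by linarith)
  by_cases hc : h ≤ t1
  · -- Case 1 : no split needed
    have hmh : m / (D+1) ≤ m - h := by rw [← hmt1]; linarith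
    have hmhpos : 0 < m - h := lt_of_lt_of_le (by positivity) hmh
    have hmh' : m ≤ (D+1) * (m - h) := by
      have h5 : h * (D+1) ≤ D * m := by
        have h6 := hc
        rw [ht1, le_div_iff₀ hD1] at h6
        exact h6
      nlinarith
    have hle : ∀ t ∈ Set.Icc (0:ℝ) h, 1 / φ t ≤ 1 / (m - t) := by
      intro t ht
      have h3 : 0 < m - t := by have := ht.2; linarith
      exact one_div_le_one_div_of_le h3 (hb1 t ht)
    have hg : IntervalIntegrable (fun t => 1 / (m - t)) MeasureTheory.volume 0 h := by
      apply ContinuousOn.intervalIntegrable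
      rw [Set.uIcc_of_le hh0]
      apply continuousOn_const.div (continuousOn_const.sub continuousOn_id)
      intro t ht
      have := ht.2; have : 0 < m - t := by linarith [hmhpos]
      exact this.ne'
    have hmono := intervalIntegral.integral_mono_on hh0 hIf hg hle
    have hFTC : (∫ t in (0:ℝ)..h, 1 / (m - t))
        = -Real.log (m - h) - -Real.log (m - 0) := by
      apply intervalIntegral.integral_eq_sub_of_hasDerivAt
        (f := fun t => -Real.log (m - t))
      · intro t ht
        rw [Set.uIcc_of_le hh0] at ht
        have h3 : 0 < m - t := by have := ht.2; linarith [hmhpos]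
        have hd : HasDerivAt (fun u : ℝ => m - u) (-1) t := by
          simpa using (hasDerivAt_id t).const_sub m
        have := ((Real.hasDerivAt_log h3.ne').comp t hd).neg
        exact HasDerivAt.congr_deriv (f := fun t => -Real.log (m - t)) this
          (by show -((m - t)⁻¹ * -1) = 1 / (m - t); ring)
      · exact hg
    have hval : (∫ t in (0:ℝ)..h, 1 / (m - t)) = Real.log m - Real.log (m - h) := by
      rw [hFTC]; ring_nf
    have hchain : Real.log m - Real.log (m - h) ≤ Real.log (1 + 2*D^2*a) := by
      rw [← Real.log_div hm.ne' hmhpos.ne']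
      apply Real.log_le_log (by positivity)
      rw [div_le_iff₀ hmhpos]
      nlinarith [hha, mul_le_mul_of_nonneg_left hmh' (mul_nonneg hD0.le ha),
        mul_nonneg (mul_nonneg (mul_nonneg hD0.le (by linarith : (0:ℝ) ≤ D - 1)) ha) hmhpos.le,
        mul_nonneg (mul_nonneg hD0.le ha) hmhpos.le]
    have hbern := aux_bernoulli_log (2*D^2) a (by nlinarith) ha
    calc (∫ t in (0:ℝ)..h, 1 / φ t) ≤ ∫ t in (0:ℝ)..h, 1 / (m - t) := hmono
      _ = Real.log m - Real.log (m - h) := hval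
      _ ≤ Real.log (1 + 2*D^2*a) := hchain
      _ ≤ 2*D^2*Real.log (1+a) := by
          have := hbern; linarith [this]
  · -- Case 2 : split at t1
    push_neg at hc
    have ht1h : t1 ≤ h := hc.le
    have hsub1 : Set.uIcc (0:ℝ) t1 ⊆ Set.uIcc (0:ℝ) h := by
      rw [Set.uIcc_of_le hh0, Set.uIcc_of_le ht1pos.le]
      exact Set.Icc_subset_Icc le_rfl ht1h
    have hsub2 : Set.uIcc t1 h ⊆ Set.uIcc (0:ℝ) h := by
      rw [Set.uIcc_of_le hh0, Set.uIcc_of_le ht1h]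
      exact Set.Icc_subset_Icc ht1pos.le le_rfl
    have hI1 := hIf.mono_set hsub1
    have hI2 := hIf.mono_set hsub2
    have hsplit : (∫ t in (0:ℝ)..h, 1 / φ t)
        = (∫ t in (0:ℝ)..t1, 1 / φ t) + ∫ t in t1..h, 1 / φ t :=
      (intervalIntegral.integral_add_adjacent_intervals hI1 hI2).symm
    have hg1 : IntervalIntegrable (fun t => 1 / (m - t)) MeasureTheory.volume 0 t1 := by
      apply ContinuousOn.intervalIntegrable
      rw [Set.uIcc_of_le ht1pos.le]
      apply continuousOn_const.div (continuousOn_const.sub continuousOn_id)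
      intro t ht
      have := ht.2; have : 0 < m - t := by linarith [ht1m]
      exact this.ne'
    have hle1 : ∀ t ∈ Set.Icc (0:ℝ) t1, 1 / φ t ≤ 1 / (m - t) := by
      intro t ht
      have h3 : 0 < m - t := by have := ht.2; linarith [ht1m]
      exact one_div_le_one_div_of_le h3 (hb1 t ⟨ht.1, le_trans ht.2 ht1h⟩)
    have hmono1 := intervalIntegral.integral_mono_on ht1pos.le
      (hIf.mono_set hsub1) hg1 hle1
    have hFTC1 : (∫ t in (0:ℝ)..t1, 1 / (m - t))
        = -Real.log (m - t1) - -Real.log (m - 0) := by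
      apply intervalIntegral.integral_eq_sub_of_hasDerivAt
        (f := fun t => -Real.log (m - t))
      · intro t ht
        rw [Set.uIcc_of_le ht1pos.le] at ht
        have h3 : 0 < m - t := by have := ht.2; linarith [ht1m]
        have hd : HasDerivAt (fun u : ℝ => m - u) (-1) t := by
          simpa using (hasDerivAt_id t).const_sub m
        have := ((Real.hasDerivAt_log h3.ne').comp t hd).neg
        exact HasDerivAt.congr_deriv (f := fun t => -Real.log (m - t)) this
          (by show -((m - t)⁻¹ * -1) = 1 / (m - t); ring)
      · exact hg1
    have hval1 : (∫ t in (0:ℝ)..t1, 1 / (m - t)) = Real.log (D+1) := by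
      rw [hFTC1, hmt1]
      have : Real.log (m / (D+1)) = Real.log m - Real.log (D+1) :=
        Real.log_div hm.ne' hD1.ne'
      rw [this]; ring_nf
    have hg2 : IntervalIntegrable (fun t => D / t) MeasureTheory.volume t1 h := by
      apply ContinuousOn.intervalIntegrable
      rw [Set.uIcc_of_le ht1h]
      apply continuousOn_const.div continuousOn_id
      intro t ht
      have := ht.1; have : 0 < t := by linarith [ht1pos]
      exact this.ne'
    have hle2 : ∀ t ∈ Set.Icc t1 h, 1 / φ t ≤ D / t := by
      intro t ht
      have h3 : 0 < t := lt_of_lt_of_le ht1pos ht.1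
      have h4 : 0 < t / D := by positivity
      have := one_div_le_one_div_of_le h4 (hb2 t ⟨h3.le, ht.2⟩)
      rwa [one_div_div] at this
    have hmono2 := intervalIntegral.integral_mono_on ht1h
      (hIf.mono_set hsub2) hg2 hle2
    have hFTC2 : (∫ t in t1..h, D / t) = D * Real.log h - D * Real.log t1 := by
      apply intervalIntegral.integral_eq_sub_of_hasDerivAt
        (f := fun t => D * Real.log t)
      · intro t ht
        rw [Set.uIcc_of_le ht1h] at ht
        have h3 : 0 < t := lt_of_lt_of_le ht1pos ht.1
        have := (Real.hasDerivAt_log h3.ne').const_mul D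
        simpa [div_eq_mul_inv] using this
      · exact hg2
    have hh' : h ≤ D * m * a / 2 := by linarith
    have h1' : D * m * 2 < D * m * a * (D+1) := by
      have h1 : t1 < D * m * a / 2 := lt_of_lt_of_le hc hh'
      rw [ht1, div_lt_div_iff₀ hD1 two_pos] at h1
      linarith
    have ha2 : 2/(D+1) ≤ a := by
      rw [div_le_iff₀ hD1]
      nlinarith [h1', mul_pos hD0 hm]
    have hlogh : Real.log h - Real.log t1 ≤ Real.log ((D+1)*a/2) := by
      have ha0 : 0 < a := lt_of_lt_of_le (by positivity) ha2
      have hhpos : 0 < h := lt_of_le_of_lt ht1pos.le hc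
      rw [← Real.log_div hhpos.ne' ht1pos.ne']
      apply Real.log_le_log (by positivity)
      rw [div_le_iff₀ ht1pos, ht1]
      have heq : (D+1)*a/2*(D*m/(D+1)) = D*m*a/2 := by field_simp
      rw [heq]; linarith
    have hk := aux_key_ineq D a hD ha2
    calc (∫ t in (0:ℝ)..h, 1 / φ t)
        = (∫ t in (0:ℝ)..t1, 1 / φ t) + ∫ t in t1..h, 1 / φ t := hsplit
      _ ≤ Real.log (D+1) + (D * Real.log h - D * Real.log t1) := by
          rw [← hval1, ← hFTC2]; exact add_le_add hmono1 hmono2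
      _ ≤ Real.log (D+1) + D * Real.log ((D+1)*a/2) := by
          have := mul_le_mul_of_nonneg_left hlogh hD0.le
          linarith
      _ ≤ 2*D^2*Real.log (1+a) := hk

/- ## Topological auxiliary lemmas -/

lemma aux_isOpen_range_coe (X : Type*) [MetricSpace X] [LocallyCompactSpace X] :
    IsOpen (Set.range ((↑) : X → Completion X)) := by
  rw [isOpen_iff_mem_nhds]
  rintro _ ⟨x, rfl⟩
  obtain ⟨r, hr, hcomp⟩ := exists_isCompact_closedBall x
  have himg : IsCompact ((fun z : X => (z : Completion X)) '' Metric.closedBall x r) :=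
    hcomp.image (Completion.continuous_coe X)
  have hsub : Metric.ball (x : Completion X) r ⊆ Set.range ((↑) : X → Completion X) := by
    intro p hp
    have hdense : Dense (Set.range ((↑) : X → Completion X)) :=
      Completion.denseRange_coe
    have h1 : Metric.ball (x : Completion X) r ⊆
        closure (Metric.ball (x : Completion X) r ∩ Set.range ((↑) : X → Completion X)) :=
      hdense.open_subset_closure_inter Metric.isOpen_ball
    have h2 : Metric.ball (x : Completion X) r ∩ Set.range ((↑) : X → Completion X) ⊆
        (fun z : X => (z : Completion X)) '' Metric.closedBall x r := by
      rintro q ⟨hq1, z, rfl⟩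
      refine ⟨z, ?_, rfl⟩
      have : dist (z : Completion X) (x : Completion X) < r := hq1
      rw [Completion.dist_eq] at this
      exact Metric.mem_closedBall.2 this.le
    have h3 := closure_mono h2
    rw [himg.isClosed.closure_eq] at h3
    obtain ⟨z, _, hz⟩ := h3 (h1 hp)
    exact ⟨z, hz⟩
  exact Filter.mem_of_superset (Metric.ball_mem_nhds _ hr) hsub

lemma aux_distB_pos {X : Type*} [MetricSpace X] [LocallyCompactSpace X]
    (hnc : (Set.range ((↑) : X → Completion X))ᶜ.Nonempty) (z : X) : 0 < distB z := by
  have hcl : IsClosed (Set.range ((↑) : X → Completion X))ᶜ :=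
    (aux_isOpen_range_coe X).isClosed_compl
  have hz : (z : Completion X) ∉ (Set.range ((↑) : X → Completion X))ᶜ :=
    fun h => h ⟨z, rfl⟩
  exact (hcl.notMem_iff_infDist_pos hnc).1 hz

lemma aux_distB_sub_dist_le {X : Type*} [MetricSpace X] (z w : X) :
    distB z - dist z w ≤ distB w := by
  have h := Metric.infDist_le_infDist_add_dist
    (x := (z : Completion X)) (y := (w : Completion X))
    (s := (Set.range ((↑) : X → Completion X))ᶜ)
  rw [Completion.dist_eq] at h
  unfold distB
  linarith

lemma aux_distB_continuous {X : Type*} [MetricSpace X] : Continuous (distB (X := X)) :=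
  (Metric.continuous_infDist_pt _).comp (Completion.continuous_coe X)

/-- in a D_ε-uniform space, the quasihyperbolic distance satisfies
k_ε(x,y) ≤ 4 D_ε² log(1 + d_ε(x,y)/min{d_ε(x), d_ε(y)}). -/
theorem stmt_8 {X : Type*} [MetricSpace X] [LocallyCompactSpace X]
    (hnc : (Set.range ((↑) : X → Completion X))ᶜ.Nonempty)
    (D : ℝ) (hD : 1 ≤ D)
    -- D-uniformity: every pair of points is joined by an arclength-parametrized curve
    -- which is D-quasiconvex and satisfies the cigar condition
    (hunif : ∀ x y : X, ∃ γ L, IsUnitSpeed γ L ∧ γ 0 = x ∧ γ L = y ∧ L ≤ D * dist x y ∧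
      ∀ t ∈ Set.Icc (0:ℝ) L, min t (L - t) ≤ D * distB (γ t))
    (x y : X) :
    qhDist x y ≤ 4 * D ^ 2 * Real.log (1 + dist x y / min (distB x) (distB y)) := by
  obtain ⟨γ, L, hγ, hx, hy, hLs, hcigar⟩ := hunif x y
  have hL0 : 0 ≤ L := hγ.1
  have hD0 : (0:ℝ) < D := lt_of_lt_of_le one_pos hD
  have hdpos : ∀ z : X, 0 < distB z := aux_distB_pos hnc
  set m := min (distB x) (distB y) with hmdef
  have hm0 : 0 < m := lt_min (hdpos x) (hdpos y)
  set a := dist x y / m with hadef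
  have ha0 : 0 ≤ a := div_nonneg dist_nonneg hm0.le
  have hma : m * a = dist x y := by rw [hadef]; field_simp
  -- Step 1 : qhDist is at most the line integral along the uniform curve γ
  have hstep : qhDist x y ≤ lineIntegral (fun z => 1 / distB z) γ L := by
    apply csInf_le
    · refine ⟨0, ?_⟩
      rintro r ⟨γ', L', hγ', -, -, rfl⟩
      exact intervalIntegral.integral_nonneg hγ'.1
        (fun t _ => div_nonneg zero_le_one (hdpos _).le)
    · exact ⟨γ, L, hγ, hx, hy, rfl⟩
  refine hstep.trans ?_
  -- the line integral is ∫ 1/distB(γ t)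
  have hline : lineIntegral (fun z => 1 / distB z) γ L
      = ∫ t in (0:ℝ)..L, 1 / distB (γ t) := rfl
  rw [hline]
  -- Lipschitz estimate
  have hlip : ∀ u v, u ∈ Set.Icc 0 L → v ∈ Set.Icc 0 L →
      dist (γ u) (γ v) ≤ |u - v| := by
    intro u v hu hv
    have := hγ.2.dist_le_mul u hu v hv
    simpa [Real.dist_eq] using this
  have hφcont : ContinuousOn (fun t => distB (γ t)) (Set.Icc 0 L) :=
    aux_distB_continuous.comp_continuousOn hγ.2.continuousOn
  -- integrability over [0, L]
  have hIfL : IntervalIntegrable (fun t => 1 / distB (γ t)) MeasureTheory.volume 0 L := by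
    apply ContinuousOn.intervalIntegrable
    rw [Set.uIcc_of_le hL0]
    exact continuousOn_const.div hφcont (fun t ht => (hdpos (γ t)).ne')
  have hhalf0 : (0:ℝ) ≤ L/2 := by linarith
  have hsub1 : Set.uIcc (0:ℝ) (L/2) ⊆ Set.uIcc (0:ℝ) L := by
    rw [Set.uIcc_of_le hL0, Set.uIcc_of_le hhalf0]
    exact Set.Icc_subset_Icc le_rfl (by linarith)
  have hsub2 : Set.uIcc (L/2) L ⊆ Set.uIcc (0:ℝ) L := by
    rw [Set.uIcc_of_le hL0, Set.uIcc_of_le (by linarith : L/2 ≤ L)]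
    exact Set.Icc_subset_Icc hhalf0 le_rfl
  have hsplitL : (∫ t in (0:ℝ)..L, 1 / distB (γ t)) =
      (∫ t in (0:ℝ)..L/2, 1 / distB (γ t)) + ∫ t in (L/2)..L, 1 / distB (γ t) :=
    (intervalIntegral.integral_add_adjacent_intervals
      (hIfL.mono_set hsub1) (hIfL.mono_set hsub2)).symm
  -- first half
  have hhalf1 : (∫ t in (0:ℝ)..L/2, 1 / distB (γ t)) ≤ 2*D^2*Real.log (1+a) := by
    apply aux_half_bound (fun t => distB (γ t)) D m a (L/2) hD hm0 ha0 hhalf0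
    · rw [mul_assoc, hma]; linarith
    · exact hφcont.mono (by rw [← Set.uIcc_of_le hL0, ← Set.uIcc_of_le hhalf0]; exact hsub1)
    · intro t ht
      exact hdpos (γ t)
    · intro t ht
      have htL : t ∈ Set.Icc 0 L := ⟨ht.1, by linarith [ht.2]⟩
      have h1 := aux_distB_sub_dist_le x (γ t)
      have h2 : dist x (γ t) ≤ t := by
        have := hlip 0 t ⟨le_rfl, hL0⟩ htL
        rw [hx] at this
        calc dist x (γ t) ≤ |0 - t| := this
          _ = t := by rw [zero_sub, abs_neg, abs_of_nonneg ht.1]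
      have h3 : m ≤ distB x := min_le_left _ _
      linarith
    · intro t ht
      have htL : t ∈ Set.Icc 0 L := ⟨ht.1, by linarith [ht.2]⟩
      have hcig := hcigar t htL
      have hmin : min t (L - t) = t := min_eq_left (by linarith [ht.2])
      rw [hmin] at hcig
      rw [div_le_iff₀ hD0]
      nlinarith [hcig]
  -- second half, via reflection
  have hrefl : (∫ t in (L/2)..L, 1 / distB (γ t))
      = ∫ t in (0:ℝ)..(L/2), 1 / distB (γ (L - t)) := by
    have h := intervalIntegral.integral_comp_sub_left
      (a := (0:ℝ)) (b := L/2) (fun t => 1 / distB (γ t)) L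
    rw [show L - L/2 = L/2 by ring, sub_zero] at h
    exact h.symm
  have hhalf2 : (∫ t in (0:ℝ)..(L/2), 1 / distB (γ (L - t))) ≤ 2*D^2*Real.log (1+a) := by
    apply aux_half_bound (fun t => distB (γ (L - t))) D m a (L/2) hD hm0 ha0 hhalf0
    · rw [mul_assoc, hma]; linarith
    · have hmap : Set.MapsTo (fun t : ℝ => L - t) (Set.Icc 0 (L/2)) (Set.Icc 0 L) := by
        intro t ht
        simp only [Set.mem_Icc] at ht ⊢
        constructor <;> linarith [ht.1, ht.2]
      exact aux_distB_continuous.comp_continuousOn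
        ((hγ.2.continuousOn).comp ((continuousOn_const.sub continuousOn_id)) hmap)
    · intro t ht
      exact hdpos _
    · intro t ht
      have htL : L - t ∈ Set.Icc 0 L := ⟨by linarith [ht.2], by linarith [ht.1]⟩
      have h1 := aux_distB_sub_dist_le y (γ (L - t))
      have h2 : dist y (γ (L - t)) ≤ t := by
        have := hlip L (L - t) ⟨hL0, le_rfl⟩ htL
        rw [hy] at this
        calc dist y (γ (L - t)) ≤ |L - (L - t)| := this
          _ = t := by rw [show L - (L - t) = t by ring, abs_of_nonneg ht.1]
      have h3 : m ≤ distB y := min_le_right _ _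
      linarith
    · intro t ht
      have htL : L - t ∈ Set.Icc 0 L := ⟨by linarith [ht.2], by linarith [ht.1]⟩
      have hcig := hcigar (L - t) htL
      have hmin : min (L - t) (L - (L - t)) = t := by
        rw [show L - (L - t) = t by ring]
        exact min_eq_right (by linarith [ht.2])
      rw [hmin] at hcig
      rw [div_le_iff₀ hD0]
      nlinarith [hcig]
  -- combine
  calc (∫ t in (0:ℝ)..L, 1 / distB (γ t))
      = (∫ t in (0:ℝ)..L/2, 1 / distB (γ t)) + ∫ t in (L/2)..L, 1 / distB (γ t) := hsplitL
    _ ≤ 2*D^2*Real.log (1+a) + 2*D^2*Real.log (1+a) := by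
        rw [hrefl]; exact add_le_add hhalf1 hhalf2
    _ = 4*D^2*Real.log (1+a) := by ring
end

section
/- Frostman-type mass distribution: for any compact curve γ in a metric space there exists a Radon measure ν supported on γ such that ν(E) ≤ diam(E) for every E ⊂ γ and ν(γ) ≥ diam(γ)/60. -/
open MeasureTheory

/-- Frostman-type mass distribution: for every compact curve γ (the image
of a continuous curve) in a metric space there is a Radon measure ν supported on γ with
ν(E) ≤ diam(E) for every E ⊆ γ and ν(γ) ≥ diam(γ)/60. -/
theorem stmt_10 {X : Type*} [MetricSpace X] [MeasurableSpace X] [BorelSpace X]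
    (γ : Set X) (f : ℝ → X) (hf : Continuous f) (hγ : γ = f '' Set.Icc 0 1)
    (hnontriv : ∃ a ∈ γ, ∃ b ∈ γ, a ≠ b) :
    ∃ ν : Measure X, ν γᶜ = 0 ∧
      (∀ E : Set X, E ⊆ γ → ν E ≤ ENNReal.ofReal (Metric.diam E)) ∧
      ENNReal.ofReal (Metric.diam γ / 60) ≤ ν γ := by
  obtain ⟨a₀, ha₀, b₀, hb₀, hab₀⟩ := hnontriv
  have hγcomp : IsCompact γ := hγ ▸ (isCompact_Icc.image hf)
  have hγbd : Bornology.IsBounded γ := hγcomp.isBounded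
  have hdiam_pos : 0 < Metric.diam γ :=
    lt_of_lt_of_le (dist_pos.2 hab₀) (Metric.dist_le_diam_of_mem hγbd ha₀ hb₀)
  -- pick a, b with dist a b > diam γ / 2
  obtain ⟨a, ha, b, hb, hD⟩ : ∃ a ∈ γ, ∃ b ∈ γ, Metric.diam γ / 2 < dist a b := by
    by_contra hcon
    push_neg at hcon
    have : Metric.diam γ ≤ Metric.diam γ / 2 :=
      Metric.diam_le_of_forall_dist_le (by positivity) fun x hx y hy => hcon x hx y hy
    linarith
  set D : ℝ := dist a b with hDdef
  have hDpos : 0 < D := lt_of_le_of_lt (by positivity) hD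
  -- the 1-Lipschitz map g and the curve parametrization
  set g : X → ℝ := fun x => dist x a with hgdef
  have hg_lip : LipschitzWith 1 g := LipschitzWith.dist_left a
  have hg_cont : Continuous g := hg_lip.continuous
  set h : ℝ → ℝ := fun u => g (f u) with hhdef
  have hh_cont : Continuous h := hg_cont.comp hf
  obtain ⟨u₀, hu₀, hfu₀⟩ : ∃ u ∈ Set.Icc (0:ℝ) 1, f u = a := by
    rw [hγ] at ha; exact ha
  obtain ⟨u₁, hu₁, hfu₁⟩ : ∃ u ∈ Set.Icc (0:ℝ) 1, f u = b := by
    rw [hγ] at hb; exact hb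
  have hh₀ : h u₀ = 0 := by simp [hhdef, hgdef, hfu₀]
  have hh₁ : h u₁ = D := by simp [hhdef, hgdef, hfu₁, hDdef, dist_comm]
  -- hitting sets
  set H : ℝ → Set ℝ := fun t => {u ∈ Set.uIcc u₀ u₁ | h u = t} with hHdef
  have hHclosed : ∀ t, IsClosed (H t) := fun t =>
    isCompact_uIcc.isClosed.inter (isClosed_eq hh_cont continuous_const)
  have hHbdd : ∀ t, BddBelow (H t) := fun t =>
    (Bornology.IsBounded.subset (isCompact_uIcc.isBounded) (fun u hu => hu.1)).bddBelow
  have hHne : ∀ t ∈ Set.Icc (0:ℝ) D, (H t).Nonempty := by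
    intro t ht
    have : t ∈ Set.uIcc (h u₀) (h u₁) := by
      rw [hh₀, hh₁, Set.uIcc_of_le hDpos.le]; exact ht
    obtain ⟨u, hu, hut⟩ := intermediate_value_uIcc (hh_cont.continuousOn) this
    exact ⟨u, hu, hut⟩
  set σ : ℝ → ℝ := fun t => sInf (H t) with hσdef
  have hσ_mem : ∀ t, (H t).Nonempty → σ t ∈ H t := fun t hne =>
    (hHclosed t).csInf_mem hne (hHbdd t)
  -- σ is measurable
  have hHne_iff : ∀ t, (H t).Nonempty ↔ t ∈ h '' Set.uIcc u₀ u₁ := by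
    intro t
    constructor
    · rintro ⟨u, hu, hut⟩; exact ⟨u, hu, hut⟩
    · rintro ⟨u, hu, hut⟩; exact ⟨u, hu, hut⟩
  have hσ_meas : Measurable σ := by
    apply measurable_of_Iic
    intro c
    have key : σ ⁻¹' Set.Iic c =
        (h '' (Set.uIcc u₀ u₁ ∩ Set.Iic c)) ∪
          (if (0:ℝ) ≤ c then (h '' Set.uIcc u₀ u₁)ᶜ else ∅) := by
      ext t
      simp only [Set.mem_preimage, Set.mem_Iic, Set.mem_union]
      constructor
      · intro htc
        by_cases hne : (H t).Nonempty
        · left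
          have hm := hσ_mem t hne
          exact ⟨σ t, ⟨hm.1, htc⟩, hm.2⟩
        · right
          have h0 : σ t = 0 := by
            rw [hσdef]
            simp only
            rw [Set.not_nonempty_iff_eq_empty.1 hne, Real.sInf_empty]
          rw [h0] at htc
          rw [if_pos htc]
          intro hmem
          exact hne ((hHne_iff t).2 hmem)
      · rintro (⟨u, ⟨huI, huc⟩, hut⟩ | hrest)
        · have : σ t ≤ u := csInf_le (hHbdd t) ⟨huI, hut⟩
          exact this.trans huc
        · by_cases h0c : (0:ℝ) ≤ c
          · rw [if_pos h0c] at hrest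
            have hne : ¬(H t).Nonempty := fun hne => hrest ((hHne_iff t).1 hne)
            have h0 : σ t = 0 := by
              rw [hσdef]; simp only
              rw [Set.not_nonempty_iff_eq_empty.1 hne, Real.sInf_empty]
            rw [h0]; exact h0c
          · rw [if_neg h0c] at hrest; exact absurd hrest (Set.notMem_empty t)
    rw [key]
    apply MeasurableSet.union
    · exact ((isCompact_uIcc.inter_right isClosed_Iic).image hh_cont).measurableSet
    · split
      · exact ((isCompact_uIcc.image hh_cont).measurableSet).compl
      · exact MeasurableSet.empty
  -- the section s and the measure ν
  set s : ℝ → X := fun t => f (σ t) with hsdef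
  have hs_meas : Measurable s := hf.measurable.comp hσ_meas
  set μ₀ : Measure ℝ := volume.restrict (Set.Icc 0 D) with hμ₀def
  refine ⟨Measure.map s μ₀, ?_, ?_, ?_⟩
  · -- ν γᶜ = 0
    have hγmeas : MeasurableSet γ := hγcomp.isClosed.measurableSet
    rw [Measure.map_apply hs_meas hγmeas.compl]
    have : s ⁻¹' γᶜ = ∅ := by
      ext t
      simp only [Set.mem_preimage, Set.mem_compl_iff, Set.mem_empty_iff_false, iff_false,
        not_not]
      have hσI : σ t ∈ Set.Icc (0:ℝ) 1 := by
        by_cases hne : (H t).Nonempty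
        · have := (hσ_mem t hne).1
          have hsub : Set.uIcc u₀ u₁ ⊆ Set.Icc (0:ℝ) 1 := by
            rw [show Set.Icc (0:ℝ) 1 = Set.uIcc 0 1 by rw [Set.uIcc_of_le zero_le_one]]
            exact Set.uIcc_subset_uIcc (by rw [Set.uIcc_of_le zero_le_one]; exact hu₀)
              (by rw [Set.uIcc_of_le zero_le_one]; exact hu₁)
          exact hsub this
        · have h0 : σ t = 0 := by
            rw [hσdef]; simp only
            rw [Set.not_nonempty_iff_eq_empty.1 hne, Real.sInf_empty]
          rw [h0]; exact ⟨le_refl 0, zero_le_one⟩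
      rw [hγ]
      exact ⟨σ t, hσI, rfl⟩
    rw [this]
    simp
  · -- ν E ≤ diam E for E ⊆ γ
    intro E hE
    have hEcl : closure E ⊆ γ := closure_minimal hE hγcomp.isClosed
    have hEcl_comp : IsCompact (closure E) := hγcomp.of_isClosed_subset isClosed_closure hEcl
    have hstep1 : (Measure.map s μ₀) E ≤ (Measure.map s μ₀) (closure E) :=
      measure_mono subset_closure
    have hstep2 : (Measure.map s μ₀) (closure E) = μ₀ (s ⁻¹' closure E) :=
      Measure.map_apply hs_meas isClosed_closure.measurableSet
    have hstep3 : μ₀ (s ⁻¹' closure E) ≤ volume (g '' closure E) := by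
      rw [hμ₀def, Measure.restrict_apply (hs_meas isClosed_closure.measurableSet)]
      apply measure_mono
      rintro t ⟨hts, htI⟩
      have hne := hHne t htI
      have hm := hσ_mem t hne
      refine ⟨s t, hts, ?_⟩
      show g (f (σ t)) = t
      exact hm.2
    have hstep4 : volume (g '' closure E) ≤ Metric.ediam (g '' closure E) :=
      Real.volume_le_diam _
    have hstep5 : Metric.ediam (g '' closure E) ≤ Metric.ediam (closure E) := by
      have := hg_lip.ediam_image_le (closure E)
      simpa using this
    have hstep6 : Metric.ediam (closure E) = ENNReal.ofReal (Metric.diam E) := by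
      rw [EMetric.diam_closure]
      have hEbd : Bornology.IsBounded E := hγbd.subset hE
      rw [Metric.diam, ENNReal.ofReal_toReal (Metric.isBounded_iff_ediam_ne_top.1 hEbd)]
    calc (Measure.map s μ₀) E ≤ volume (g '' closure E) := hstep1.trans (hstep2 ▸ hstep3)
      _ ≤ ENNReal.ofReal (Metric.diam E) := hstep4.trans (hstep5.trans_eq hstep6)
  · -- ν γ ≥ diam γ / 60
    have hγmeas : MeasurableSet γ := hγcomp.isClosed.measurableSet
    rw [Measure.map_apply hs_meas hγmeas]
    have hpre : s ⁻¹' γ = Set.univ := by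
      ext t
      simp only [Set.mem_preimage, Set.mem_univ, iff_true]
      have hσI : σ t ∈ Set.Icc (0:ℝ) 1 := by
        by_cases hne : (H t).Nonempty
        · have := (hσ_mem t hne).1
          have hsub : Set.uIcc u₀ u₁ ⊆ Set.Icc (0:ℝ) 1 := by
            rw [show Set.Icc (0:ℝ) 1 = Set.uIcc 0 1 by rw [Set.uIcc_of_le zero_le_one]]
            exact Set.uIcc_subset_uIcc (by rw [Set.uIcc_of_le zero_le_one]; exact hu₀)
              (by rw [Set.uIcc_of_le zero_le_one]; exact hu₁)
          exact hsub this
        · have h0 : σ t = 0 := by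
            rw [hσdef]; simp only
            rw [Set.not_nonempty_iff_eq_empty.1 hne, Real.sInf_empty]
          rw [h0]; exact ⟨le_refl 0, zero_le_one⟩
      rw [hγ]
      exact ⟨σ t, hσI, rfl⟩
    rw [hpre, hμ₀def]
    rw [Measure.restrict_apply_univ, Real.volume_Icc]
    apply ENNReal.ofReal_le_ofReal
    rw [sub_zero]
    calc Metric.diam γ / 60 ≤ Metric.diam γ / 2 := by linarith
      _ ≤ D := hD.le
end
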